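/- Let q ≡ 3 (mod 4) be a prime power and E ⊆ 𝔽_q² with |E| ≥ Cq for a sufficiently large absolute constant C. Then for each nonzero square r ∈ 𝔽_q, the number of quadruples (a,b,c,d) ∈ E⁴ with ‖a−b‖ = r‖c−d‖ ≠ 0 is at least c|E|⁴/q for an absolute constant c > 0. In particular, every square of 𝔽_q belongs to Δ(E)/Δ(E). -/

import Mathlib

open scoped Classical

open Finset
set_option linter.unusedSectionVars false

namespace Stmt5Aux

variable {Fq : Type} [Field Fq] [Fintype Fq]

def nsq (v : Fin 2 → Fq) : Fq := v 0 ^ 2 + v 1 ^ 2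

def cmul (v w : Fin 2 → Fq) : Fin 2 → Fq := ![v 0 * w 0 - v 1 * w 1, v 0 * w 1 + v 1 * w 0]

lemma nsq_cmul (v w : Fin 2 → Fq) : nsq (cmul v w) = nsq v * nsq w := by
  simp [nsq, cmul]; ring

lemma cmul_sub (g z w : Fin 2 → Fq) : cmul g (z - w) = cmul g z - cmul g w := by
  funext i; fin_cases i <;> simp [cmul] <;> ring

lemma sub_cmul (g g' w : Fin 2 → Fq) : cmul (g - g') w = cmul g w - cmul g' w := by
  funext i; fin_cases i <;> simp [cmul] <;> ring

lemma cmul_zero (g : Fin 2 → Fq) : cmul g (0 : Fin 2 → Fq) = 0 := by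
  funext i; fin_cases i <;> simp [cmul]

lemma nsq_eq_zero (hq : Fintype.card Fq % 4 = 3) {v : Fin 2 → Fq} :
    nsq v = 0 ↔ v = 0 := by
  constructor
  · intro h
    have hns : ¬ IsSquare (-1 : Fq) := by
      rw [FiniteField.isSquare_neg_one_iff]; simp [hq]
    have h1 : v 1 = 0 := by
      by_contra hb
      apply hns
      refine ⟨-(v 0 / v 1), ?_⟩
      have : (v 0 / v 1) ^ 2 = -1 := by
        have hv : v 0 ^ 2 + v 1 ^ 2 = 0 := h
        field_simp
        linear_combination hv
      rw [← this]; ring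
    have h0 : v 0 = 0 := by
      have := h
      unfold nsq at this
      rw [h1] at this
      simpa [pow_eq_zero_iff] using this
    funext i; fin_cases i <;> simp [h0, h1]
  · intro h; simp [h, nsq]

lemma cmul_right_cancel (hq : Fintype.card Fq % 4 = 3) {g g' w : Fin 2 → Fq} (hw : w ≠ 0)
    (h : cmul g w = cmul g' w) : g = g' := by
  have h0 : cmul (g - g') w = 0 := by rw [sub_cmul, h, sub_self]
  have : nsq (g - g') * nsq w = 0 := by rw [← nsq_cmul, h0]; simp [nsq]
  have hwn : nsq w ≠ 0 := fun hh => hw ((nsq_eq_zero hq).1 hh)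
  have : nsq (g - g') = 0 := by
    rcases mul_eq_zero.1 this with h | h
    · exact h
    · exact absurd h hwn
  have := (nsq_eq_zero hq).1 this
  exact sub_eq_zero.1 this

end Stmt5Aux

namespace Stmt5Aux

variable {Fq : Type} [Field Fq] [Fintype Fq]

lemma exists_g (hq : Fintype.card Fq % 4 = 3) {r : Fq} {u w : Fin 2 → Fq}
    (hw : nsq w ≠ 0) (h : nsq u = r * nsq w) :
    ∃ g : Fin 2 → Fq, nsq g = r ∧ cmul g w = u := by
  classical
  set g : Fin 2 → Fq := (nsq w)⁻¹ • cmul u ![w 0, - w 1] with hg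
  have key : cmul (cmul u ![w 0, - w 1]) w = nsq w • u := by
    funext i; fin_cases i <;> simp [cmul, nsq, Pi.smul_apply, smul_eq_mul] <;> ring
  have hsmul : ∀ (c : Fq) (a b : Fin 2 → Fq), cmul (c • a) b = c • cmul a b := by
    intro c a b; funext i; fin_cases i <;> simp [cmul, Pi.smul_apply, smul_eq_mul] <;> ring
  have hgw : cmul g w = u := by
    rw [hg, hsmul, key, smul_smul, inv_mul_cancel₀ hw, one_smul]
  refine ⟨g, ?_, hgw⟩
  have : nsq g * nsq w = r * nsq w := by rw [← nsq_cmul, hgw, h]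
  exact mul_right_cancel₀ hw this

lemma card_G (hq : Fintype.card Fq % 4 = 3) {r : Fq} (hr : r ≠ 0) :
    Fintype.card Fq + 1 ≤ (univ.filter (fun g : Fin 2 → Fq => nsq g = r)).card := by
  classical
  set q := Fintype.card Fq with hqdef
  have hodd : q % 2 = 1 := by
    have : q % 4 % 2 = q % 2 := Nat.mod_mod_of_dvd q (by norm_num)
    rw [← this, hq]
  -- every element of Fq is a sum of two squares
  have hsum : ∀ t : Fq, ∃ a b : Fq, a ^ 2 + b ^ 2 = t := by
    intro t
    obtain ⟨a, b, hab⟩ := FiniteField.exists_root_sum_quadratic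
      (f := Polynomial.X ^ 2) (g := Polynomial.X ^ 2 - Polynomial.C t)
      (Polynomial.degree_X_pow 2) (Polynomial.degree_X_pow_sub_C (by norm_num) t) hodd
    refine ⟨a, b, ?_⟩
    simp only [Polynomial.eval_pow, Polynomial.eval_X, Polynomial.eval_sub,
      Polynomial.eval_C] at hab
    linear_combination hab
  set F : Fq → Finset (Fin 2 → Fq) := fun t => univ.filter (fun v => nsq v = t) with hF
  -- each nonzero fiber injects into the fiber over r
  have hinj : ∀ t : Fq, t ≠ 0 → (F t).card ≤ (F r).card := by
    intro t ht
    obtain ⟨a, b, hab⟩ := hsum (r / t)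
    set w : Fin 2 → Fq := ![a, b] with hwdef
    have hw : nsq w = r / t := by simpa [nsq, hwdef] using hab
    have hwne : nsq w ≠ 0 := by rw [hw]; exact div_ne_zero hr ht
    have hw0 : w ≠ 0 := fun hh => hwne (by rw [hh]; simp [nsq])
    apply Finset.card_le_card_of_injOn (fun v => cmul v w)
    · intro v hv
      simp only [hF, mem_filter, mem_univ, true_and] at hv ⊢
      simp only [Finset.mem_coe, mem_filter, mem_univ, true_and] at hv ⊢
      rw [nsq_cmul, hv, hw]
      field_simp
    · intro v1 h1 v2 h2 hvv
      exact cmul_right_cancel hq hw0 hvv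
  -- total count
  have hcard2 : Fintype.card (Fin 2 → Fq) = q ^ 2 := by
    simp [hqdef]
  have htot : ∑ t : Fq, (F t).card = q ^ 2 := by
    rw [← hcard2, ← Finset.card_univ]
    exact (Finset.card_eq_sum_card_fiberwise (f := nsq)
      (s := (univ : Finset (Fin 2 → Fq))) (t := univ) (fun x _ => mem_univ _)).symm
  have hF0 : (F 0).card = 1 := by
    have : F 0 = {0} := by
      ext v; simp [hF, nsq_eq_zero hq]
    rw [this]; simp
  have hsplit : ∑ t : Fq, (F t).card = (F 0).card + ∑ t ∈ univ.erase (0 : Fq), (F t).card := by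
    rw [← Finset.sum_erase_add _ _ (mem_univ (0 : Fq))]; ring
  have hbound : ∑ t ∈ univ.erase (0 : Fq), (F t).card ≤ (q - 1) * (F r).card := by
    calc ∑ t ∈ univ.erase (0 : Fq), (F t).card ≤ ∑ _t ∈ univ.erase (0 : Fq), (F r).card := by
          apply Finset.sum_le_sum
          intro t ht
          exact hinj t (Finset.ne_of_mem_erase ht)
      _ = (q - 1) * (F r).card := by
          rw [Finset.sum_const, smul_eq_mul, Finset.card_erase_of_mem (mem_univ _),
            Finset.card_univ]
  have hq3 : 3 ≤ q := by
    have := Nat.mod_le q 4; omega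
  have : q ^ 2 ≤ 1 + (q - 1) * (F r).card := by
    rw [← htot, hsplit, hF0]; omega
  -- conclude q + 1 ≤ (F r).card
  nlinarith [Nat.sub_add_cancel (by omega : 1 ≤ q), this, hq3]

end Stmt5Aux

namespace Stmt5Aux

variable {Fq : Type} [Field Fq] [Fintype Fq]

lemma main_count (hq : Fintype.card Fq % 4 = 3) (E : Finset (Fin 2 → Fq))
    (hE : 2 * (Fintype.card Fq : ℝ) ≤ (E.card : ℝ)) {r : Fq} (hr : r ≠ 0) :
    (1/2 : ℝ) * (E.card : ℝ) ^ 4 / (Fintype.card Fq : ℝ) ≤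
      ((((E ×ˢ E) ×ˢ (E ×ˢ E)).filter
        (fun p => nsq (p.1.1 - p.1.2) = r * nsq (p.2.1 - p.2.2) ∧
          nsq (p.2.1 - p.2.2) ≠ 0)).card : ℝ) := by
  classical
  set q := Fintype.card Fq with hqdef
  set P : Finset (((Fin 2 → Fq) × (Fin 2 → Fq)) × ((Fin 2 → Fq) × (Fin 2 → Fq))) :=
    (E ×ˢ E) ×ˢ (E ×ˢ E) with hP
  set G : Finset (Fin 2 → Fq) := univ.filter (fun g => nsq g = r) with hG
  set B : (Fin 2 → Fq) → Finset (((Fin 2 → Fq) × (Fin 2 → Fq)) × ((Fin 2 → Fq) × (Fin 2 → Fq))) :=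
    fun g => P.filter (fun p => p.1.1 - p.1.2 = cmul g (p.2.1 - p.2.2) ∧ p.2.1 ≠ p.2.2) with hB
  -- Step A : decomposition of the filtered set as a disjoint union over G
  have QeqBiUnion :
      P.filter (fun p => nsq (p.1.1 - p.1.2) = r * nsq (p.2.1 - p.2.2) ∧
          nsq (p.2.1 - p.2.2) ≠ 0) = G.biUnion B := by
    ext p
    simp only [Finset.mem_biUnion, hB, hG, Finset.mem_filter, Finset.mem_univ, true_and]
    constructor
    · rintro ⟨hp, heq, hne⟩
      obtain ⟨g, hgr, hgw⟩ := exists_g hq hne heq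
      exact ⟨g, hgr, hp, hgw.symm, fun hcc => hne (by rw [hcc, sub_self]; simp [nsq])⟩
    · rintro ⟨g, hgr, hp, heq, hne⟩
      have hw : p.2.1 - p.2.2 ≠ 0 := sub_ne_zero.2 hne
      have hwn : nsq (p.2.1 - p.2.2) ≠ 0 := fun hh => hw ((nsq_eq_zero hq).1 hh)
      refine ⟨hp, ?_, hwn⟩
      rw [heq, nsq_cmul, hgr]
  have hdisj : ∀ g1 ∈ G, ∀ g2 ∈ G, g1 ≠ g2 → Disjoint (B g1) (B g2) := by
    intro g1 _ g2 _ hne12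
    refine Finset.disjoint_left.2 fun p hp1 hp2 => ?_
    simp only [hB, Finset.mem_filter] at hp1 hp2
    have hw : p.2.1 - p.2.2 ≠ 0 := sub_ne_zero.2 hp1.2.2
    exact hne12 (cmul_right_cancel hq hw (hp1.2.1.symm.trans hp2.2.1))
  -- Step B,C,D,E : lower bound for each (B g).card
  have key : ∀ g ∈ G, ((E.card : ℝ))^4 / (q : ℝ)^2 - (E.card : ℝ)^2 ≤ ((B g).card : ℝ) := by
    intro g _
    set Cg := P.filter (fun p => p.1.1 - p.1.2 = cmul g (p.2.1 - p.2.2)) with hCg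
    -- split Cg into B g and diagonal
    have hsplitC : (B g).card + (E.card)^2 = Cg.card := by
      have h1 : Cg.filter (fun p => p.2.1 ≠ p.2.2) = B g := by
        ext p
        simp only [hCg, hB, Finset.mem_filter, and_assoc]
      have h2 : (Cg.filter (fun p => p.2.1 = p.2.2)).card = E.card ^ 2 := by
        rw [sq, ← Finset.card_product]
        apply Finset.card_bij (fun p _ => (p.1.1, p.2.1))
        · rintro p hp
          simp only [hCg, hP, Finset.mem_filter, Finset.mem_product] at hp
          exact Finset.mem_product.2 ⟨hp.1.1.1.1, hp.1.1.2.1⟩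
        · rintro p hp p' hp' hee
          simp only [hCg, hP, Finset.mem_filter, Finset.mem_product] at hp hp'
          obtain ⟨⟨-, heqp⟩, hdp⟩ := hp
          obtain ⟨⟨-, heqp'⟩, hdp'⟩ := hp'
          have hz : p.2.1 - p.2.2 = 0 := by rw [hdp]; simp
          have hz' : p'.2.1 - p'.2.2 = 0 := by rw [hdp']; simp
          have hxx : p.1.1 = p.1.2 := by
            have := heqp; rw [hz, cmul_zero] at this; exact sub_eq_zero.1 this
          have hxx' : p'.1.1 = p'.1.2 := by
            have := heqp'; rw [hz', cmul_zero] at this; exact sub_eq_zero.1 this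
          injection hee with e1 e2
          have hfst : p.1 = p'.1 := Prod.ext_iff.mpr ⟨e1, by rw [← hxx, ← hxx']; exact e1⟩
          have hsnd : p.2 = p'.2 := Prod.ext_iff.mpr ⟨e2, by rw [← hdp, ← hdp']; exact e2⟩
          exact Prod.ext_iff.mpr ⟨hfst, hsnd⟩
        · rintro ⟨xx, zz⟩ hxz
          obtain ⟨hxmem, hzmem⟩ := Finset.mem_product.1 hxz
          refine ⟨((xx, xx), (zz, zz)), ?_, rfl⟩
          simp only [hCg, hP, Finset.mem_filter, Finset.mem_product]
          refine ⟨⟨⟨⟨hxmem, hxmem⟩, hzmem, hzmem⟩, ?_⟩, ?_⟩ <;> simp [cmul_zero]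
      have := Finset.card_filter_add_card_filter_not
        (s := Cg) (p := fun p => p.2.1 ≠ p.2.2)
      rw [h1] at this
      rw [← this]
      congr 1
      · rw [← h2]
        congr 1
        ext p
        simp
    -- express Cg.card as a sum of squares of fiber sizes
    set T : (Fin 2 → Fq) → ℕ := fun u => ((E ×ˢ E).filter (fun a => a.1 - cmul g a.2 = u)).card
      with hT
    have hCgcard : Cg.card = ∑ u : Fin 2 → Fq, (T u)^2 := by
      have hbij : Cg.card = (((E ×ˢ E) ×ˢ (E ×ˢ E)).filter
          (fun a : ((Fin 2 → Fq) × (Fin 2 → Fq)) × ((Fin 2 → Fq) × (Fin 2 → Fq)) =>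
            a.1.1 - cmul g a.1.2 = a.2.1 - cmul g a.2.2)).card := by
        apply Finset.card_bij (fun p _ => ((p.1.1, p.2.1), (p.1.2, p.2.2)))
        · rintro p hp
          simp only [hCg, hP, Finset.mem_filter, Finset.mem_product] at hp ⊢
          obtain ⟨⟨⟨h1, h2⟩, h3, h4⟩, heq⟩ := hp
          refine ⟨⟨⟨h1, h3⟩, h2, h4⟩, ?_⟩
          rw [cmul_sub] at heq
          exact sub_eq_sub_iff_sub_eq_sub.1 heq
        · rintro p hp p' hp' hee
          simp only [Prod.ext_iff] at hee ⊢
          obtain ⟨⟨a1, a2⟩, a3, a4⟩ := hee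
          exact ⟨⟨a1, a3⟩, a2, a4⟩
        · rintro a ha
          simp only [Finset.mem_filter, Finset.mem_product] at ha
          obtain ⟨⟨⟨h1, h2⟩, h3, h4⟩, heq⟩ := ha
          refine ⟨((a.1.1, a.2.1), (a.1.2, a.2.2)), ?_, rfl⟩
          simp only [hCg, hP, Finset.mem_filter, Finset.mem_product]
          refine ⟨⟨⟨h1, h3⟩, h2, h4⟩, ?_⟩
          rw [cmul_sub]
          exact sub_eq_sub_iff_sub_eq_sub.2 heq
      rw [hbij]
      have hunion : ((E ×ˢ E) ×ˢ (E ×ˢ E)).filter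
          (fun a : ((Fin 2 → Fq) × (Fin 2 → Fq)) × ((Fin 2 → Fq) × (Fin 2 → Fq)) =>
            a.1.1 - cmul g a.1.2 = a.2.1 - cmul g a.2.2) =
          (univ : Finset (Fin 2 → Fq)).biUnion (fun u =>
            ((E ×ˢ E).filter (fun a => a.1 - cmul g a.2 = u)) ×ˢ
            ((E ×ˢ E).filter (fun a => a.1 - cmul g a.2 = u))) := by
        ext a
        simp only [Finset.mem_biUnion, Finset.mem_univ, true_and, Finset.mem_filter,
          Finset.mem_product]
        constructor
        · rintro ⟨⟨h1, h2⟩, heq⟩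
          exact ⟨a.1.1 - cmul g a.1.2, ⟨h1, rfl⟩, h2, heq.symm⟩
        · rintro ⟨u, ⟨h1, e1⟩, h2, e2⟩
          exact ⟨⟨h1, h2⟩, by rw [e1, e2]⟩
      rw [hunion, Finset.card_biUnion]
      · apply Finset.sum_congr rfl
        intro u _
        rw [Finset.card_product, sq]
      · intro u1 _ u2 _ hu
        refine Finset.disjoint_left.2 fun a ha1 ha2 => ?_
        simp only [Finset.mem_product, Finset.mem_filter] at ha1 ha2
        exact hu (ha1.1.2.symm.trans ha2.1.2)
    have hTsum : ∑ u : Fin 2 → Fq, T u = E.card ^ 2 := by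
      rw [sq, ← Finset.card_product]
      exact (Finset.card_eq_sum_card_fiberwise
        (f := fun a : (Fin 2 → Fq) × (Fin 2 → Fq) => a.1 - cmul g a.2)
        (s := E ×ˢ E) (t := univ) (fun x _ => mem_univ _)).symm
    -- Cauchy–Schwarz
    have hcard2 : Fintype.card (Fin 2 → Fq) = q ^ 2 := by simp [hqdef]
    have hCS : ((E.card : ℝ) ^ 2) ^ 2 ≤ (q : ℝ)^2 * ∑ u : Fin 2 → Fq, ((T u : ℝ))^2 := by
      have := sq_sum_le_card_mul_sum_sq (s := (univ : Finset (Fin 2 → Fq)))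
        (f := fun u => (T u : ℝ))
      rw [Finset.card_univ, hcard2] at this
      calc ((E.card : ℝ) ^ 2) ^ 2 = (∑ u : Fin 2 → Fq, (T u : ℝ))^2 := by
            rw [← Nat.cast_sum, hTsum]; push_cast; ring
        _ ≤ ((q:ℕ)^2 : ℕ) * ∑ u : Fin 2 → Fq, ((T u : ℝ))^2 := this
        _ = (q : ℝ)^2 * ∑ u : Fin 2 → Fq, ((T u : ℝ))^2 := by push_cast; ring
    have hqpos : (0 : ℝ) < (q : ℝ) := by
      have : 3 ≤ q := by have := Nat.mod_le q 4; omega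
      positivity
    have hCgR : ((Cg.card : ℝ)) = ∑ u : Fin 2 → Fq, ((T u : ℝ))^2 := by
      rw [hCgcard]; push_cast; ring_nf
    have hBg : ((B g).card : ℝ) = (Cg.card : ℝ) - (E.card : ℝ)^2 := by
      have : ((B g).card : ℝ) + (E.card : ℝ)^2 = (Cg.card : ℝ) := by
        exact_mod_cast congrArg (Nat.cast (R := ℝ)) hsplitC
      linarith
    rw [hBg, hCgR]
    have : ((E.card : ℝ))^4 / (q:ℝ)^2 ≤ ∑ u : Fin 2 → Fq, ((T u : ℝ))^2 := by
      rw [div_le_iff₀ (by positivity)]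
      nlinarith [hCS]
    linarith
  -- assemble
  rw [QeqBiUnion, Finset.card_biUnion hdisj]
  have hGcard : (q : ℝ) + 1 ≤ (G.card : ℝ) := by
    have := card_G hq hr
    rw [← hG] at this
    exact_mod_cast this
  have hsum : ((G.card : ℝ)) * ((E.card : ℝ)^4 / (q:ℝ)^2 - (E.card : ℝ)^2) ≤
      ((∑ g ∈ G, (B g).card : ℕ) : ℝ) := by
    rw [Nat.cast_sum]
    calc (G.card : ℝ) * ((E.card : ℝ)^4 / (q:ℝ)^2 - (E.card : ℝ)^2)
        = ∑ _g ∈ G, ((E.card : ℝ)^4 / (q:ℝ)^2 - (E.card : ℝ)^2) := by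
          rw [Finset.sum_const, nsmul_eq_mul]
      _ ≤ ∑ g ∈ G, ((B g).card : ℝ) := Finset.sum_le_sum key
  have hqpos : (0 : ℝ) < (q : ℝ) := by
    have : 3 ≤ q := by have := Nat.mod_le q 4; omega
    have : (3:ℝ) ≤ (q:ℝ) := by exact_mod_cast this
    linarith
  set x := (E.card : ℝ) with hx
  set k := (q : ℝ) with hk
  have hterm : (0:ℝ) ≤ x^4/k^2 - x^2 := by
    rw [sub_nonneg, le_div_iff₀ (by positivity)]
    have h4 : 4*k^2 ≤ x^2 := by nlinarith [hE, hqpos]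
    nlinarith [mul_nonneg (sq_nonneg x) (by linarith : (0:ℝ) ≤ x^2 - 4*k^2),
      mul_nonneg (sq_nonneg x) (sq_nonneg k)]
  have hfinal : (1/2 : ℝ) * x^4 / k ≤ ((q:ℝ)+1) * (x^4/k^2 - x^2) := by
    have h1 : 2*k ≤ x := hE
    have hxpos : (0:ℝ) < x := by linarith
    have h4 : 4*k^2 ≤ x^2 := by nlinarith
    have e1 : ((q:ℝ)+1) * (x^4/k^2 - x^2) = ((k+1)*(x^4 - k^2*x^2))/k^2 := by
      rw [← hk]; field_simp
    have e2 : (1/2 : ℝ) * x^4 / k = (1/2 * x^4 * k)/k^2 := by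
      field_simp
    rw [e1, e2, div_le_div_iff_of_pos_right (by positivity)]
    have hA : (0:ℝ) ≤ x^2 * (x^2 - 4*k^2) := mul_nonneg (sq_nonneg x) (by linarith)
    have hB : (0:ℝ) ≤ k * (k+1) * (x^2 * (x^2 - 4*k^2)) :=
      mul_nonneg (mul_nonneg hqpos.le (by linarith)) hA
    nlinarith [hB, mul_nonneg hqpos.le (pow_nonneg hxpos.le 4),
      mul_nonneg (mul_nonneg hqpos.le hqpos.le) (pow_nonneg hxpos.le 4)]
  calc (1/2 : ℝ) * x^4 / k ≤ ((q:ℝ)+1) * (x^4/k^2 - x^2) := hfinal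
    _ ≤ (G.card : ℝ) * (x^4/k^2 - x^2) := by
        apply mul_le_mul_of_nonneg_right hGcard hterm
    _ ≤ _ := hsum

end Stmt5Aux

theorem stmt_5 :
    ∃ C c : ℝ, 0 < C ∧ 0 < c ∧
      ∀ (Fq : Type) [Field Fq] [Fintype Fq],
        Fintype.card Fq % 4 = 3 →
        ∀ (E : Finset (Fin 2 → Fq)),
          (C * (Fintype.card Fq : ℝ) ≤ (E.card : ℝ)) →
          ∀ r : Fq, r ≠ 0 → (∃ s : Fq, r = s ^ 2) →
            letI nsq : (Fin 2 → Fq) → Fq := fun w => w 0 ^ 2 + w 1 ^ 2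
            c * (E.card : ℝ) ^ 4 / (Fintype.card Fq : ℝ) ≤
              ((((E ×ˢ E) ×ˢ (E ×ˢ E)).filter
                (fun p => nsq (p.1.1 - p.1.2) = r * nsq (p.2.1 - p.2.2) ∧
                  nsq (p.2.1 - p.2.2) ≠ 0)).card : ℝ) ∧
            (∃ a ∈ E, ∃ b ∈ E, ∃ cc ∈ E, ∃ d ∈ E,
              nsq (cc - d) ≠ 0 ∧ nsq (a - b) = r * nsq (cc - d)) := by
  classical
  refine ⟨2, 1/2, by norm_num, by norm_num, ?_⟩
  intro Fq _ _ hq E hE r hr0 _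
  have hcount := Stmt5Aux.main_count hq E hE hr0
  refine ⟨hcount, ?_⟩
  -- the filtered set is nonempty
  have hq3 : 3 ≤ Fintype.card Fq := by
    have := Nat.mod_le (Fintype.card Fq) 4; omega
  have hqposR : (0:ℝ) < (Fintype.card Fq : ℝ) := by
    have : (3:ℝ) ≤ (Fintype.card Fq : ℝ) := by exact_mod_cast hq3
    linarith
  have hxpos : (0:ℝ) < (E.card : ℝ) := by nlinarith
  have hpos : (0:ℝ) < (1/2 : ℝ) * (E.card : ℝ) ^ 4 / (Fintype.card Fq : ℝ) := by positivity
  have hcard : 0 < (((E ×ˢ E) ×ˢ (E ×ˢ E)).filter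
      (fun p => Stmt5Aux.nsq (p.1.1 - p.1.2) = r * Stmt5Aux.nsq (p.2.1 - p.2.2) ∧
        Stmt5Aux.nsq (p.2.1 - p.2.2) ≠ 0)).card := by
    by_contra hzero
    push_neg at hzero
    have : (((E ×ˢ E) ×ˢ (E ×ˢ E)).filter
      (fun p => Stmt5Aux.nsq (p.1.1 - p.1.2) = r * Stmt5Aux.nsq (p.2.1 - p.2.2) ∧
        Stmt5Aux.nsq (p.2.1 - p.2.2) ≠ 0)).card = 0 := by omega
    have h0 : ((((E ×ˢ E) ×ˢ (E ×ˢ E)).filter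
      (fun p => Stmt5Aux.nsq (p.1.1 - p.1.2) = r * Stmt5Aux.nsq (p.2.1 - p.2.2) ∧
        Stmt5Aux.nsq (p.2.1 - p.2.2) ≠ 0)).card : ℝ) = 0 := by exact_mod_cast this
    have := hcount
    rw [h0] at this
    linarith
  obtain ⟨p, hp⟩ := Finset.card_pos.1 hcard
  rw [Finset.mem_filter] at hp
  obtain ⟨hpmem, heq, hne⟩ := hp
  rw [Finset.mem_product] at hpmem
  obtain ⟨h12, h34⟩ := hpmem
  rw [Finset.mem_product] at h12 h34
  exact ⟨p.1.1, h12.1, p.1.2, h12.2, p.2.1, h34.1, p.2.2, h34.2, hne, heq⟩
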